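/- Let X have distribution ν on ℝ with mean 0, density p with connected support, Stein kernel τ_ν ≥ σ² > 0 ν-a.s., and suppose in addition that L(x) = x^{1+β} p(x) is nonincreasing on [s, ∞) for some s > 0 and β > 1. Then for all x ≥ s, P(X ≥ x) ≥ (1 − 1/β) · (E[X₊]/x) · exp(−x²/(2σ²)). -/

import Mathlib

open MeasureTheory Set ENNReal

lemma fubini_B (g : ℝ → ℝ) (hg : Measurable g) (x : ℝ) :
    ∫⁻ y in Ioi x, ∫⁻ w in Ioi y, ENNReal.ofReal (g w) ∂volume ∂volume
      = ∫⁻ w in Ioi x, ENNReal.ofReal (g w) * ENNReal.ofReal (w - x) := by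
  set F : ℝ × ℝ → ℝ≥0∞ := fun q => if q.1 < q.2 then ENNReal.ofReal (g q.2) else 0 with hF
  have hFmeas : Measurable F := by
    apply Measurable.ite (measurableSet_lt measurable_fst measurable_snd)
    · exact (ENNReal.measurable_ofReal.comp (hg.comp measurable_snd))
    · exact measurable_const
  have h1 : ∀ y : ℝ, (∫⁻ w in Ioi y, ENNReal.ofReal (g w)) = ∫⁻ w, F (y, w) := by
    intro y
    rw [← lintegral_indicator measurableSet_Ioi]
    refine lintegral_congr fun w => ?_
    by_cases hw : y < w <;> simp [hF, hw, indicator, mem_Ioi]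
  have h2 : ∫⁻ y in Ioi x, ∫⁻ w, F (y, w) ∂volume ∂volume
      = ∫⁻ w, ∫⁻ y in Ioi x, F (y, w) ∂volume ∂volume :=
    lintegral_lintegral_swap hFmeas.aemeasurable
  have h3 : ∀ w : ℝ, (∫⁻ y in Ioi x, F (y, w) ∂volume) = ENNReal.ofReal (g w) * ENNReal.ofReal (w - x) := by
    intro w
    have he : ∀ y : ℝ, F (y, w) = (Iio w).indicator (fun _ => ENNReal.ofReal (g w)) y := by
      intro y; by_cases hy : y < w <;> simp [hF, hy, indicator, mem_Iio]
    simp_rw [he]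
    rw [lintegral_indicator measurableSet_Iio, Measure.restrict_restrict measurableSet_Iio,
      lintegral_const, Measure.restrict_apply MeasurableSet.univ, univ_inter,
      Iio_inter_Ioi, Real.volume_Ioo]
  have h4 : ∀ w : ℝ, ENNReal.ofReal (g w) * ENNReal.ofReal (w - x)
      = (Ioi x).indicator (fun w => ENNReal.ofReal (g w) * ENNReal.ofReal (w - x)) w := by
    intro w
    by_cases hw : x < w
    · simp [indicator, hw]
    · push_neg at hw
      simp [indicator, hw, ENNReal.ofReal_eq_zero.mpr (by linarith : w - x ≤ 0), not_lt.mpr hw]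
  simp_rw [h1, h2, h3]
  rw [lintegral_congr h4, lintegral_indicator measurableSet_Ioi]

lemma ftc_exp (σ : ℝ) (hσ : 0 < σ) (m : ℝ) (hm : 0 ≤ m) :
    ∫⁻ z in Ioc 0 m, ENNReal.ofReal (z / σ ^ 2 * Real.exp (z ^ 2 / (2 * σ ^ 2)))
      = ENNReal.ofReal (Real.exp (m ^ 2 / (2 * σ ^ 2)) - 1) := by
  have hσ2 : (0:ℝ) < σ ^ 2 := by positivity
  have hucont : Continuous fun z : ℝ => z / σ ^ 2 * Real.exp (z ^ 2 / (2 * σ ^ 2)) := by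
    exact (continuous_id.div_const _).mul
      (Real.continuous_exp.comp ((continuous_id.pow 2).div_const _))
  have hint : IntegrableOn (fun z : ℝ => z / σ ^ 2 * Real.exp (z ^ 2 / (2 * σ ^ 2)))
      (Ioc 0 m) volume := ((hucont.continuousOn).integrableOn_Icc).mono_set Ioc_subset_Icc_self
  have hnn : 0 ≤ᵐ[volume.restrict (Ioc 0 m)]
      fun z : ℝ => z / σ ^ 2 * Real.exp (z ^ 2 / (2 * σ ^ 2)) := by
    filter_upwards [ae_restrict_mem measurableSet_Ioc] with z hz
    have : 0 < z := hz.1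
    positivity
  rw [← ofReal_integral_eq_lintegral_ofReal hint hnn]
  congr 1
  rw [← intervalIntegral.integral_of_le hm,
    intervalIntegral.integral_eq_sub_of_hasDerivAt (f := fun z => Real.exp (z ^ 2 / (2 * σ ^ 2)))
      (fun z _ => ?_) (hucont.intervalIntegrable 0 m)]
  · norm_num
  · have h1 : HasDerivAt (fun z : ℝ => z ^ 2 / (2 * σ ^ 2)) (z / σ ^ 2) z := by
      have := (hasDerivAt_pow 2 z).div_const (2 * σ ^ 2)
      refine this.congr_deriv ?_
      field_simp
      ring
    have := h1.exp
    refine this.congr_deriv ?_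
    ring

lemma fubini_A (g : ℝ → ℝ) (hg : Measurable g) (hg0 : ∀ y, 0 ≤ g y) (σ x : ℝ)
    (hσ : 0 < σ) (hx : 0 < x) :
    ∫⁻ z in Ioc 0 x, ENNReal.ofReal (z / σ ^ 2 * Real.exp (z ^ 2 / (2 * σ ^ 2)))
        * ∫⁻ w in Ioi z, ENNReal.ofReal (w * g w)
      = (∫⁻ w in Ioc 0 x, ENNReal.ofReal (w * g w)
            * ENNReal.ofReal (Real.exp (w ^ 2 / (2 * σ ^ 2)) - 1))
        + ENNReal.ofReal (Real.exp (x ^ 2 / (2 * σ ^ 2)) - 1)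
            * ∫⁻ w in Ioi x, ENNReal.ofReal (w * g w) := by
  set u : ℝ → ℝ := fun z => z / σ ^ 2 * Real.exp (z ^ 2 / (2 * σ ^ 2)) with hu
  set F : ℝ × ℝ → ℝ≥0∞ := fun q =>
    if q.1 < q.2 then ENNReal.ofReal (u q.1) * ENNReal.ofReal (q.2 * g q.2) else 0 with hF
  have hwg : Measurable fun w : ℝ => ENNReal.ofReal (w * g w) :=
    (measurable_id.mul hg).ennreal_ofReal
  have hucont : Continuous u :=
    (continuous_id.div_const _).mul
      (Real.continuous_exp.comp ((continuous_id.pow 2).div_const _))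
  have hFmeas : Measurable F := by
    apply Measurable.ite (measurableSet_lt measurable_fst measurable_snd)
    · exact ((hucont.measurable.comp measurable_fst).ennreal_ofReal).mul
        (hwg.comp measurable_snd)
    · exact measurable_const
  have h1 : ∀ z : ℝ, ENNReal.ofReal (u z) * (∫⁻ w in Ioi z, ENNReal.ofReal (w * g w))
      = ∫⁻ w, F (z, w) := by
    intro z
    rw [← lintegral_const_mul _ hwg, ← lintegral_indicator measurableSet_Ioi]
    refine lintegral_congr fun w => ?_
    by_cases hw : z < w <;> simp [hF, hw, indicator, mem_Ioi]
  have h2 : ∫⁻ z in Ioc 0 x, ∫⁻ w, F (z, w) ∂volume ∂volume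
      = ∫⁻ w, ∫⁻ z in Ioc 0 x, F (z, w) ∂volume ∂volume :=
    lintegral_lintegral_swap hFmeas.aemeasurable
  have h3 : ∀ w : ℝ, (∫⁻ z in Ioc 0 x, F (z, w) ∂volume)
      = (∫⁻ z in Iio w ∩ Ioc 0 x, ENNReal.ofReal (u z)) * ENNReal.ofReal (w * g w) := by
    intro w
    have he : ∀ z : ℝ, F (z, w)
        = (Iio w).indicator (fun z => ENNReal.ofReal (u z) * ENNReal.ofReal (w * g w)) z := by
      intro z; by_cases hz : z < w <;> simp [hF, hz, indicator, mem_Iio]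
    calc ∫⁻ z in Ioc 0 x, F (z, w) ∂volume
        = ∫⁻ z in Iio w ∩ Ioc 0 x, ENNReal.ofReal (u z) * ENNReal.ofReal (w * g w) := by
          simp_rw [he]
          rw [lintegral_indicator measurableSet_Iio,
            Measure.restrict_restrict measurableSet_Iio]
      _ = _ := lintegral_mul_const _ (hucont.measurable.comp measurable_id).ennreal_ofReal
  have h4 : ∀ w : ℝ, (∫⁻ z in Iio w ∩ Ioc 0 x, ENNReal.ofReal (u z)) * ENNReal.ofReal (w * g w)
      = (Ioi 0).indicator (fun w =>
          (∫⁻ z in Iio w ∩ Ioc 0 x, ENNReal.ofReal (u z)) * ENNReal.ofReal (w * g w)) w := by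
    intro w
    by_cases hw : 0 < w
    · simp [indicator, hw]
    · push_neg at hw
      have : w * g w ≤ 0 := mul_nonpos_of_nonpos_of_nonneg hw (hg0 w)
      simp [indicator, not_lt.mpr hw, ENNReal.ofReal_eq_zero.mpr this]
  calc ∫⁻ z in Ioc 0 x, ENNReal.ofReal (u z) * ∫⁻ w in Ioi z, ENNReal.ofReal (w * g w)
      = ∫⁻ w, ∫⁻ z in Ioc 0 x, F (z, w) ∂volume ∂volume := by
        rw [← h2]; exact lintegral_congr fun z => h1 z
    _ = ∫⁻ w in Ioi 0, (∫⁻ z in Iio w ∩ Ioc 0 x, ENNReal.ofReal (u z))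
          * ENNReal.ofReal (w * g w) := by
        simp_rw [h3]
        rw [lintegral_congr h4, lintegral_indicator measurableSet_Ioi]
    _ = (∫⁻ w in Ioc 0 x, (∫⁻ z in Iio w ∩ Ioc 0 x, ENNReal.ofReal (u z))
            * ENNReal.ofReal (w * g w))
        + ∫⁻ w in Ioi x, (∫⁻ z in Iio w ∩ Ioc 0 x, ENNReal.ofReal (u z))
            * ENNReal.ofReal (w * g w) := by
        rw [← Ioc_union_Ioi_eq_Ioi hx.le, lintegral_union measurableSet_Ioi
          (Ioc_disjoint_Ioi le_rfl)]
    _ = _ := by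
        congr 1
        · refine setLIntegral_congr_fun measurableSet_Ioc
            (fun w hw => ?_)
          have hset : Iio w ∩ Ioc 0 x = Ioo 0 w := by
            ext z
            simp only [mem_inter_iff, mem_Iio, mem_Ioc, mem_Ioo]
            constructor
            · rintro ⟨h1', h2', _⟩; exact ⟨h2', h1'⟩
            · rintro ⟨h1', h2'⟩; exact ⟨h2', h1', le_trans h2'.le hw.2⟩
          rw [hset, Measure.restrict_congr_set Ioo_ae_eq_Ioc, ftc_exp σ hσ w hw.1.le,
            mul_comm]
        · calc ∫⁻ w in Ioi x, (∫⁻ z in Iio w ∩ Ioc 0 x, ENNReal.ofReal (u z))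
                  * ENNReal.ofReal (w * g w)
              = ∫⁻ w in Ioi x, ENNReal.ofReal (Real.exp (x ^ 2 / (2 * σ ^ 2)) - 1)
                  * ENNReal.ofReal (w * g w) := by
                refine setLIntegral_congr_fun measurableSet_Ioi
                  (fun w hw => ?_)
                have hset : Iio w ∩ Ioc 0 x = Ioc 0 x :=
                  inter_eq_right.mpr fun z hz => lt_of_le_of_lt hz.2 hw
                rw [hset, ftc_exp σ hσ x hx.le]
            _ = _ := lintegral_const_mul _ hwg

theorem lower_tail_bound
    (p : ℝ → ℝ) (hp : ∀ x, 0 ≤ p x)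
    (ν : Measure ℝ)
    (hν : ν = volume.withDensity (fun x => ENNReal.ofReal (p x)))
    [IsProbabilityMeasure ν]
    (hconn : OrdConnected {x | 0 < p x})
    (hmom : Integrable (fun x => x) ν)
    (hmean : ∫ x, x ∂ν = 0)
    (τ : ℝ → ℝ) (hτ : ∀ x, τ x = (∫ y in Ioi x, y * p y) / p x)
    (σ : ℝ) (hσ : 0 < σ) (hbound : ∀ᵐ x ∂ν, σ ^ 2 ≤ τ x)
    (β s : ℝ) (hβ : 1 < β) (hs : 0 < s)
    (hmono : AntitoneOn (fun x => x ^ (1 + β) * p x) (Ici s))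
    (x : ℝ) (hx : s ≤ x) :
    (1 - 1 / β) * ((∫ y, max y 0 ∂ν) / x) * Real.exp (-x ^ 2 / (2 * σ ^ 2))
      ≤ (ν (Ici x)).toReal := by
  have hσ2 : (0:ℝ) < σ ^ 2 := by positivity
  have hx0 : 0 < x := lt_of_lt_of_le hs hx
  have hβ0 : (0:ℝ) < β := lt_trans one_pos hβ
  have hac : ν ≪ volume := hν ▸ withDensity_absolutelyContinuous volume _
  -- there exists z₀ < 0 where the Stein bound holds
  have hIio : ν (Iio 0) ≠ 0 := by
    intro h
    have hnn : ∀ᵐ y ∂ν, (0:ℝ) ≤ y := by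
      rw [ae_iff]
      convert h using 2
      ext y; simp [not_le]
    have hz := (integral_eq_zero_iff_of_nonneg_ae hnn hmom).mp hmean
    have hcompl : ν ({(0:ℝ)}ᶜ) = 0 := by
      rw [Filter.EventuallyEq, ae_iff] at hz
      refine measure_mono_null ?_ hz
      intro y hy
      simpa using hy
    have h1 : ν univ ≤ ν {(0:ℝ)} + ν ({(0:ℝ)}ᶜ) := by
      rw [← union_compl_self {(0:ℝ)}] ; exact measure_union_le _ _
    rw [measure_univ, hcompl, hac (Real.volume_singleton)] at h1
    simp at h1
  obtain ⟨z₀, hz₀neg, hz₀τ⟩ : ∃ z₀, z₀ < 0 ∧ σ ^ 2 ≤ τ z₀ := by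
    by_contra hcon
    push_neg at hcon
    apply hIio
    refine measure_mono_null (fun z hz => not_le.mpr (hcon z hz))
      (ae_iff.mp hbound)
  have hIz : IntegrableOn (fun y => y * p y) (Ioi z₀) volume := by
    by_contra hcon
    rw [hτ z₀, integral_undef hcon, zero_div] at hz₀τ
    exact absurd hz₀τ (not_le.mpr hσ2)
  have hInt0 : ∀ t : ℝ, 0 ≤ t → IntegrableOn (fun y => y * p y) (Ioi t) volume :=
    fun t ht => hIz.mono_set (Ioi_subset_Ioi (le_trans hz₀neg.le ht))
  -- measurable modification of p on (0,∞)
  have hmp : AEMeasurable p (volume.restrict (Ioi 0)) := by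
    have h1 : AEMeasurable (fun y => y * p y) (volume.restrict (Ioi 0)) :=
      ((hInt0 0 le_rfl).aemeasurable)
    have h2 : AEMeasurable (fun y => y * p y * y⁻¹) (volume.restrict (Ioi 0)) :=
      h1.mul (measurable_id.inv.aemeasurable)
    apply h2.congr
    filter_upwards [ae_restrict_mem measurableSet_Ioi] with y hy
    have : (y:ℝ) ≠ 0 := ne_of_gt hy
    field_simp
  set g : ℝ → ℝ := fun y => max (hmp.mk p y) 0 with hgdef
  have hg : Measurable g := hmp.measurable_mk.max measurable_const
  have hg0 : ∀ y, 0 ≤ g y := fun y => le_max_right _ _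
  have hwg : Measurable fun w : ℝ => ENNReal.ofReal (w * g w) :=
    (measurable_id.mul hg).ennreal_ofReal
  have hpg : p =ᵐ[volume.restrict (Ioi 0)] g := by
    filter_upwards [hmp.ae_eq_mk] with y hy
    rw [hgdef]; simp only [← hy]
    exact (max_eq_left (hp y)).symm
  -- H and T
  set H : ℝ → ℝ := fun t => ∫ y in Ioi t, y * p y with hH
  have hHnn : ∀ t : ℝ, 0 ≤ t → 0 ≤ H t := by
    intro t ht
    apply setIntegral_nonneg measurableSet_Ioi
    intro y hy
    exact mul_nonneg (le_trans ht (le_of_lt hy)) (hp y)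
  have hT : ∀ t : ℝ, 0 ≤ t →
      (∫⁻ w in Ioi t, ENNReal.ofReal (w * g w)) = ENNReal.ofReal (H t) := by
    intro t ht
    have hsub : Ioi t ⊆ Ioi 0 := Ioi_subset_Ioi ht
    have hcongr : (fun w => ENNReal.ofReal (w * g w))
        =ᵐ[volume.restrict (Ioi t)] (fun w => ENNReal.ofReal (w * p w)) := by
      filter_upwards [ae_mono (Measure.restrict_mono hsub le_rfl) hpg] with w hw
      rw [hw]
    rw [lintegral_congr_ae hcongr]
    rw [← ofReal_integral_eq_lintegral_ofReal (hInt0 t ht)]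
    filter_upwards [ae_restrict_mem measurableSet_Ioi] with w hw
    exact mul_nonneg (le_trans ht hw.le) (hp w)
  -- step 1a : a.e. pointwise Stein bound on (0, x]
  have hae1 : ∀ᵐ z ∂(volume.restrict (Ioc 0 x)), σ ^ 2 * p z ≤ H z := by
    set N : Set ℝ := toMeasurable ν {z | ¬ σ ^ 2 ≤ τ z} with hNdef
    have hNmeas : MeasurableSet N := measurableSet_toMeasurable _ _
    have hνN : ν N = 0 := by
      rw [hNdef, measure_toMeasurable]
      exact ae_iff.mp hbound
    have hlin : ∫⁻ z in N ∩ Ioi 0, ENNReal.ofReal (g z) ∂volume = 0 := by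
      have h1 : ∫⁻ z in N, ENNReal.ofReal (p z) ∂volume = 0 := by
        rw [hν, withDensity_apply _ hNmeas] at hνN
        exact hνN
      have h2 : ∫⁻ z in N ∩ Ioi 0, ENNReal.ofReal (p z) ∂volume = 0 :=
        le_antisymm (le_trans (lintegral_mono_set inter_subset_left) h1.le) zero_le
      rw [← h2]
      apply lintegral_congr_ae
      have := ae_restrict_of_ae_restrict_of_subset (inter_subset_right : N ∩ Ioi 0 ⊆ Ioi 0) hpg
      filter_upwards [this] with z hz
      rw [hz]
    have hg0ae : p =ᵐ[volume.restrict (N ∩ Ioi 0)] 0 := by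
      have h3 := (lintegral_eq_zero_iff hg.ennreal_ofReal).mp hlin
      have h4 := ae_restrict_of_ae_restrict_of_subset (inter_subset_right : N ∩ Ioi 0 ⊆ Ioi 0) hpg
      filter_upwards [h3, h4] with z h3z h4z
      have : g z = 0 := le_antisymm (by simpa [ENNReal.ofReal_eq_zero] using h3z.le) (hg0 z)
      rw [h4z, this]; rfl
    have h5 : ∀ᵐ z ∂(volume.restrict (Ioc 0 x)), z ∈ N → p z = 0 := by
      have hsub : N ∩ Ioc 0 x ⊆ N ∩ Ioi 0 :=
        inter_subset_inter_right _ (fun z hz => hz.1)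
      have h6 : p =ᵐ[volume.restrict (N ∩ Ioc 0 x)] 0 :=
        ae_restrict_of_ae_restrict_of_subset hsub hg0ae
      rw [← Measure.restrict_restrict hNmeas] at h6
      exact (ae_restrict_iff' hNmeas).mp h6
    filter_upwards [h5, ae_restrict_mem measurableSet_Ioc] with z hz1 hz2
    by_cases hzN : z ∈ N
    · rw [hz1 hzN, mul_zero]
      exact hHnn z hz2.1.le
    · have hzb : σ ^ 2 ≤ τ z := by
        by_contra hcon
        exact hzN (subset_toMeasurable ν _ hcon)
      rw [hτ z] at hzb
      rcases eq_or_lt_of_le (hp z) with hpz | hpz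
      · rw [← hpz, _root_.div_zero] at hzb
        exact absurd hzb (not_le.mpr hσ2)
      · rw [le_div_iff₀ hpz] at hzb
        exact hzb
  have hpgIoc : p =ᵐ[volume.restrict (Ioc 0 x)] g :=
    ae_restrict_of_ae_restrict_of_subset Ioc_subset_Ioi_self hpg
  have hEx1 : (1:ℝ) ≤ Real.exp (x ^ 2 / (2 * σ ^ 2)) := Real.one_le_exp (by positivity)
  have hsplitIoi : ∀ f : ℝ → ℝ≥0∞, (∫⁻ w in Ioi (0:ℝ), f w)
      = (∫⁻ w in Ioc 0 x, f w) + ∫⁻ w in Ioi x, f w := by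
    intro f
    rw [← Ioc_union_Ioi_eq_Ioi hx0.le, lintegral_union measurableSet_Ioi
      (Ioc_disjoint_Ioi le_rfl)]
  -- Step 1 : Gronwall-type bound
  have hstep1 : H 0 ≤ Real.exp (x ^ 2 / (2 * σ ^ 2)) * H x := by
    have key : ∫⁻ z in Ioc 0 x,
          ENNReal.ofReal (z * g z) * ENNReal.ofReal (Real.exp (z ^ 2 / (2 * σ ^ 2)))
        ≤ ∫⁻ z in Ioc 0 x, ENNReal.ofReal (z / σ ^ 2 * Real.exp (z ^ 2 / (2 * σ ^ 2)))
            * ∫⁻ w in Ioi z, ENNReal.ofReal (w * g w) := by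
      apply lintegral_mono_ae
      filter_upwards [hae1, ae_restrict_mem measurableSet_Ioc, hpgIoc] with z hz1 hz2 hz3
      have hz0 : 0 < z := hz2.1
      have hq : z * g z * Real.exp (z ^ 2 / (2 * σ ^ 2))
          = (z / σ ^ 2 * Real.exp (z ^ 2 / (2 * σ ^ 2))) * (σ ^ 2 * g z) := by
        field_simp
      calc ENNReal.ofReal (z * g z) * ENNReal.ofReal (Real.exp (z ^ 2 / (2 * σ ^ 2)))
          = ENNReal.ofReal (z / σ ^ 2 * Real.exp (z ^ 2 / (2 * σ ^ 2)))
              * ENNReal.ofReal (σ ^ 2 * g z) := by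
            rw [← ENNReal.ofReal_mul (mul_nonneg hz0.le (hg0 z)),
              ← ENNReal.ofReal_mul (by positivity), hq]
        _ ≤ _ := by
            apply mul_le_mul_right
            rw [hT z hz0.le, ← hz3]
            exact ENNReal.ofReal_le_ofReal hz1
    rw [fubini_A g hg hg0 σ x hσ hx0] at key
    have hsplit : ∫⁻ z in Ioc 0 x,
          ENNReal.ofReal (z * g z) * ENNReal.ofReal (Real.exp (z ^ 2 / (2 * σ ^ 2)))
        = (∫⁻ z in Ioc 0 x,
              ENNReal.ofReal (z * g z) * ENNReal.ofReal (Real.exp (z ^ 2 / (2 * σ ^ 2)) - 1))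
          + ∫⁻ z in Ioc 0 x, ENNReal.ofReal (z * g z) := by
      rw [← lintegral_add_right _ hwg]
      refine lintegral_congr fun z => ?_
      have h1 : (1:ℝ) ≤ Real.exp (z ^ 2 / (2 * σ ^ 2)) := Real.one_le_exp (by positivity)
      have : ENNReal.ofReal (Real.exp (z ^ 2 / (2 * σ ^ 2)))
          = ENNReal.ofReal (Real.exp (z ^ 2 / (2 * σ ^ 2)) - 1) + 1 := by
        rw [← ENNReal.ofReal_one, ← ENNReal.ofReal_add (by linarith) zero_le_one]
        norm_num
      rw [this, mul_add, mul_one]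
    rw [hsplit] at key
    have hBfin : (∫⁻ z in Ioc 0 x, ENNReal.ofReal (z * g z)) ≠ ⊤ := by
      refine ne_top_of_le_ne_top ?_ (lintegral_mono_set Ioc_subset_Ioi_self)
      rw [hT 0 le_rfl]
      exact ENNReal.ofReal_ne_top
    have hAfin : (∫⁻ z in Ioc 0 x,
        ENNReal.ofReal (z * g z) * ENNReal.ofReal (Real.exp (z ^ 2 / (2 * σ ^ 2)) - 1)) ≠ ⊤ := by
      have hle : (∫⁻ z in Ioc 0 x,
            ENNReal.ofReal (z * g z) * ENNReal.ofReal (Real.exp (z ^ 2 / (2 * σ ^ 2)) - 1))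
          ≤ ENNReal.ofReal (Real.exp (x ^ 2 / (2 * σ ^ 2)) - 1)
              * ∫⁻ z in Ioc 0 x, ENNReal.ofReal (z * g z) := by
        rw [← lintegral_const_mul _ hwg]
        apply lintegral_mono_ae
        filter_upwards [ae_restrict_mem measurableSet_Ioc] with z hz
        rw [mul_comm]
        apply mul_le_mul_left
        apply ENNReal.ofReal_le_ofReal
        have h1 : z ^ 2 ≤ x ^ 2 := by nlinarith [hz.1, hz.2]
        have h2 : z ^ 2 / (2 * σ ^ 2) ≤ x ^ 2 / (2 * σ ^ 2) := by gcongr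
        linarith [Real.exp_le_exp.mpr h2]
      exact ne_top_of_le_ne_top (ENNReal.mul_ne_top ENNReal.ofReal_ne_top hBfin) hle
    have key2 : (∫⁻ z in Ioc 0 x, ENNReal.ofReal (z * g z))
        ≤ ENNReal.ofReal (Real.exp (x ^ 2 / (2 * σ ^ 2)) - 1)
            * ∫⁻ w in Ioi x, ENNReal.ofReal (w * g w) :=
      (ENNReal.add_le_add_iff_left hAfin).mp key
    have hT0 : (∫⁻ w in Ioi (0:ℝ), ENNReal.ofReal (w * g w))
        = (∫⁻ w in Ioc 0 x, ENNReal.ofReal (w * g w)) + ∫⁻ w in Ioi x, ENNReal.ofReal (w * g w) :=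
      hsplitIoi _
    have final : ENNReal.ofReal (H 0) ≤ ENNReal.ofReal (Real.exp (x ^ 2 / (2 * σ ^ 2)) * H x) := by
      rw [← hT 0 le_rfl, hT0]
      calc (∫⁻ w in Ioc 0 x, ENNReal.ofReal (w * g w)) + ∫⁻ w in Ioi x, ENNReal.ofReal (w * g w)
          ≤ (ENNReal.ofReal (Real.exp (x ^ 2 / (2 * σ ^ 2)) - 1)
              * ∫⁻ w in Ioi x, ENNReal.ofReal (w * g w))
            + ∫⁻ w in Ioi x, ENNReal.ofReal (w * g w) := add_le_add key2 le_rfl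
        _ = (ENNReal.ofReal (Real.exp (x ^ 2 / (2 * σ ^ 2)) - 1) + 1)
              * ∫⁻ w in Ioi x, ENNReal.ofReal (w * g w) := by rw [add_mul, one_mul]
        _ = ENNReal.ofReal (Real.exp (x ^ 2 / (2 * σ ^ 2)))
              * ∫⁻ w in Ioi x, ENNReal.ofReal (w * g w) := by
            rw [← ENNReal.ofReal_one, ← ENNReal.ofReal_add (by linarith) zero_le_one]
            norm_num
        _ = ENNReal.ofReal (Real.exp (x ^ 2 / (2 * σ ^ 2)) * H x) := by
            rw [hT x hx0.le, ← ENNReal.ofReal_mul (Real.exp_nonneg _)]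
    rw [ENNReal.ofReal_le_ofReal_iff (mul_nonneg (Real.exp_nonneg _) (hHnn x hx0.le))] at final
    exact final
  -- tail identity
  have hνIci : ν (Ici x) = ∫⁻ w in Ioi x, ENNReal.ofReal (g w) := by
    have h1 : ν (Ici x) = ν (Ioi x) := by
      apply le_antisymm
      · calc ν (Ici x) = ν (insert x (Ioi x)) := by rw [Set.Ioi_insert]
          _ ≤ ν {x} + ν (Ioi x) := by
              rw [← Set.singleton_union]; exact measure_union_le _ _
          _ = ν (Ioi x) := by rw [hac Real.volume_singleton, zero_add]
      · exact measure_mono Ioi_subset_Ici_self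
    rw [h1, hν, withDensity_apply _ measurableSet_Ioi]
    apply lintegral_congr_ae
    filter_upwards [ae_restrict_of_ae_restrict_of_subset (Ioi_subset_Ioi hx0.le) hpg] with w hw
    rw [hw]
  -- step 2 : pointwise tail bound from the monotonicity assumption
  have hstep2 : ∀ y : ℝ, s ≤ y →
      (∫⁻ w in Ioi y, ENNReal.ofReal (g w)) ≤ ENNReal.ofReal (y * p y * β⁻¹) := by
    intro y hy
    have hy0 : 0 < y := lt_of_lt_of_le hs hy
    have hC0 : 0 ≤ y ^ (1 + β) * p y :=
      mul_nonneg (Real.rpow_nonneg hy0.le _) (hp y)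
    have hexp : -(1 + β) < -1 := by linarith
    have hbd : ∀ᵐ w ∂(volume.restrict (Ioi y)), ENNReal.ofReal (g w)
        ≤ ENNReal.ofReal ((y ^ (1 + β) * p y) * w ^ (-(1 + β))) := by
      filter_upwards [ae_restrict_mem measurableSet_Ioi,
        ae_restrict_of_ae_restrict_of_subset (Ioi_subset_Ioi hy0.le) hpg] with w hw hw2
      have hw0 : 0 < w := lt_trans hy0 hw
      have hm := hmono (mem_Ici.mpr hy) (mem_Ici.mpr (le_trans hy (le_of_lt hw))) (le_of_lt hw)
      have hpow : (0:ℝ) < w ^ (1 + β) := Real.rpow_pos_of_pos hw0 _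
      have hple : p w ≤ (y ^ (1 + β) * p y) * w ^ (-(1 + β)) := by
        rw [Real.rpow_neg hw0.le, mul_comm (y ^ (1 + β) * p y), ← div_eq_inv_mul,
          le_div_iff₀ hpow]
        calc p w * w ^ (1 + β) = w ^ (1 + β) * p w := mul_comm _ _
          _ ≤ y ^ (1 + β) * p y := hm
      rw [← hw2]
      exact ENNReal.ofReal_le_ofReal hple
    have hint : IntegrableOn (fun w : ℝ => (y ^ (1 + β) * p y) * w ^ (-(1 + β)))
        (Ioi y) volume := (integrableOn_Ioi_rpow_of_lt hexp hy0).const_mul _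
    calc (∫⁻ w in Ioi y, ENNReal.ofReal (g w))
        ≤ ∫⁻ w in Ioi y, ENNReal.ofReal ((y ^ (1 + β) * p y) * w ^ (-(1 + β))) :=
          lintegral_mono_ae hbd
      _ = ENNReal.ofReal (∫ w in Ioi y, (y ^ (1 + β) * p y) * w ^ (-(1 + β))) := by
          rw [← ofReal_integral_eq_lintegral_ofReal hint]
          filter_upwards [ae_restrict_mem measurableSet_Ioi] with w hw
          have hw0 : 0 < w := lt_trans hy0 hw
          exact mul_nonneg hC0 (Real.rpow_nonneg hw0.le _)
      _ = ENNReal.ofReal (y * p y * β⁻¹) := by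
          congr 1
          rw [integral_const_mul, integral_Ioi_rpow_of_lt hexp hy0]
          have hy1 : y ^ (1 + β) * y ^ (-β) = y := by
            rw [← Real.rpow_add hy0, show (1 + β) + -β = 1 by ring, Real.rpow_one]
          rw [show -(1 + β) + 1 = -β by ring]
          calc y ^ (1 + β) * p y * (-y ^ (-β) / -β)
              = y ^ (1 + β) * y ^ (-β) * p y * β⁻¹ := by ring
            _ = y * p y * β⁻¹ := by rw [hy1]
  -- step 3
  have hchain : ENNReal.ofReal (H x) ≤ ENNReal.ofReal x * ν (Ici x)
      + ENNReal.ofReal β⁻¹ * ENNReal.ofReal (H x) := by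
    have hsplitT : ENNReal.ofReal (H x) = (∫⁻ w in Ioi x, ENNReal.ofReal x * ENNReal.ofReal (g w))
        + ∫⁻ w in Ioi x, ENNReal.ofReal (g w) * ENNReal.ofReal (w - x) := by
      rw [← hT x hx0.le, ← lintegral_add_left (f := fun w => ENNReal.ofReal x * ENNReal.ofReal (g w)) (measurable_const.mul hg.ennreal_ofReal)]
      refine setLIntegral_congr_fun measurableSet_Ioi
        (fun w hw => ?_)
      have hw0 : 0 < w := lt_trans hx0 hw
      rw [← ENNReal.ofReal_mul hx0.le, ← ENNReal.ofReal_mul (hg0 w),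
        ← ENNReal.ofReal_add (mul_nonneg hx0.le (hg0 w))
          (mul_nonneg (hg0 w) (sub_nonneg.mpr (le_of_lt hw)))]
      congr 1
      ring
    have h2 : (∫⁻ w in Ioi x, ENNReal.ofReal x * ENNReal.ofReal (g w))
        = ENNReal.ofReal x * ν (Ici x) := by
      rw [lintegral_const_mul _ hg.ennreal_ofReal, hνIci]
    have hB : (∫⁻ w in Ioi x, ENNReal.ofReal (g w) * ENNReal.ofReal (w - x))
        ≤ ENNReal.ofReal β⁻¹ * ENNReal.ofReal (H x) := by
      rw [← fubini_B g hg x]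
      calc ∫⁻ y in Ioi x, ∫⁻ w in Ioi y, ENNReal.ofReal (g w) ∂volume ∂volume
          ≤ ∫⁻ y in Ioi x, ENNReal.ofReal (y * g y) * ENNReal.ofReal β⁻¹ ∂volume := by
            apply lintegral_mono_ae
            filter_upwards [ae_restrict_mem measurableSet_Ioi,
              ae_restrict_of_ae_restrict_of_subset (Ioi_subset_Ioi hx0.le) hpg] with y hy hy2
            refine le_trans (hstep2 y (le_trans hx (le_of_lt hy))) ?_
            rw [← ENNReal.ofReal_mul' (inv_nonneg.mpr hβ0.le), ← hy2]
        _ = ENNReal.ofReal β⁻¹ * ∫⁻ y in Ioi x, ENNReal.ofReal (y * g y) := by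
            rw [lintegral_mul_const _ hwg, mul_comm]
        _ = ENNReal.ofReal β⁻¹ * ENNReal.ofReal (H x) := by
            rw [hT x hx0.le]
    calc ENNReal.ofReal (H x)
        = (∫⁻ w in Ioi x, ENNReal.ofReal x * ENNReal.ofReal (g w))
          + ∫⁻ w in Ioi x, ENNReal.ofReal (g w) * ENNReal.ofReal (w - x) := hsplitT
      _ = ENNReal.ofReal x * ν (Ici x)
          + ∫⁻ w in Ioi x, ENNReal.ofReal (g w) * ENNReal.ofReal (w - x) := by rw [h2]
      _ ≤ _ := add_le_add le_rfl hB
  -- convert step 3 to reals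
  have hνfin : ν (Ici x) ≠ ⊤ := measure_ne_top ν _
  have hreal3 : H x ≤ x * (ν (Ici x)).toReal + β⁻¹ * H x := by
    have hfin1 : ENNReal.ofReal x * ν (Ici x) ≠ ⊤ :=
      ENNReal.mul_ne_top ENNReal.ofReal_ne_top hνfin
    have hfin2 : ENNReal.ofReal β⁻¹ * ENNReal.ofReal (H x) ≠ ⊤ :=
      ENNReal.mul_ne_top ENNReal.ofReal_ne_top ENNReal.ofReal_ne_top
    have hmono' := ENNReal.toReal_mono (ENNReal.add_ne_top.mpr ⟨hfin1, hfin2⟩) hchain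
    rw [ENNReal.toReal_ofReal (hHnn x hx0.le), ENNReal.toReal_add hfin1 hfin2,
      ENNReal.toReal_mul, ENNReal.toReal_mul, ENNReal.toReal_ofReal hx0.le,
      ENNReal.toReal_ofReal (inv_nonneg.mpr hβ0.le),
      ENNReal.toReal_ofReal (hHnn x hx0.le)] at hmono'
    exact hmono'
  -- E[X₊] = H 0
  have hEX : ∫ y, max y 0 ∂ν = H 0 := by
    have hmeasmax : Measurable fun y : ℝ => max y 0 := measurable_id.max measurable_const
    rw [integral_eq_lintegral_of_nonneg_ae
      (Filter.Eventually.of_forall fun y => le_max_right y 0) hmeasmax.aestronglyMeasurable]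
    have h1 : ∫⁻ y, ENNReal.ofReal (max y 0) ∂ν = ∫⁻ y in Ioi 0, ENNReal.ofReal y ∂ν := by
      rw [← lintegral_indicator measurableSet_Ioi]
      refine lintegral_congr fun y => ?_
      by_cases hy : y ∈ Ioi 0
      · rw [indicator_of_mem hy, max_eq_left (le_of_lt hy)]
      · rw [indicator_of_notMem hy, max_eq_right (not_lt.mp hy)]
        simp
    have h2 : ν.restrict (Ioi 0)
        = (volume.restrict (Ioi 0)).withDensity (fun y => ENNReal.ofReal (g y)) := by
      rw [hν, restrict_withDensity measurableSet_Ioi]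
      exact withDensity_congr_ae (hpg.mono fun y hy => by simp [hy])
    have h3 : ∫⁻ y in Ioi 0, ENNReal.ofReal y ∂ν = ENNReal.ofReal (H 0) := by
      rw [h2, lintegral_withDensity_eq_lintegral_mul _ hg.ennreal_ofReal
        ENNReal.measurable_ofReal, ← hT 0 le_rfl]
      refine lintegral_congr fun y => ?_
      simp only [Pi.mul_apply]
      rw [← ENNReal.ofReal_mul (hg0 y), mul_comm]
    rw [h1, h3, ENNReal.toReal_ofReal (hHnn 0 le_rfl)]
  -- final assembly
  have ht1 : (0:ℝ) ≤ 1 - 1 / β := by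
    rw [sub_nonneg, div_le_one hβ0]
    exact hβ.le
  have hkey : (1 - 1 / β) * H x ≤ x * (ν (Ici x)).toReal := by
    rw [one_div]
    nlinarith [hreal3]
  have hE : Real.exp (-x ^ 2 / (2 * σ ^ 2)) = (Real.exp (x ^ 2 / (2 * σ ^ 2)))⁻¹ := by
    rw [neg_div, Real.exp_neg]
  have hHr : H 0 * (Real.exp (x ^ 2 / (2 * σ ^ 2)))⁻¹ ≤ H x := by
    rw [← div_eq_mul_inv, div_le_iff₀ (Real.exp_pos _)]
    linarith [hstep1]
  rw [hEX, hE]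
  calc (1 - 1 / β) * (H 0 / x) * (Real.exp (x ^ 2 / (2 * σ ^ 2)))⁻¹
      = ((1 - 1 / β) * (H 0 * (Real.exp (x ^ 2 / (2 * σ ^ 2)))⁻¹)) / x := by ring
    _ ≤ ((1 - 1 / β) * H x) / x := by gcongr
    _ ≤ (x * (ν (Ici x)).toReal) / x := by gcongr
    _ = (ν (Ici x)).toReal := by field_simp
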